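/- Let B, C ∈ B(H) be self-adjoint operators. Then max{ ‖B + C‖², ‖B − C‖² } ≤ ‖B² + C²‖ + 2·w(|B||C|). -/

import Mathlib

open ContinuousLinearMap

variable {H : Type*} [NormedAddCommGroup H] [InnerProductSpace ℂ H] [CompleteSpace H]

/-- The numerical radius of a bounded linear operator:
`w(T) = sup { |⟨Tx, x⟩| : ‖x‖ = 1 }`. -/
noncomputable def numRadius {E : Type*} [NormedAddCommGroup E] [InnerProductSpace ℂ E]
    (T : E →L[ℂ] E) : ℝ :=
  sSup {r : ℝ | ∃ x : E, ‖x‖ = 1 ∧ r = ‖(inner ℂ (T x) x : ℂ)‖}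

/-- The absolute value `|T| = (T*T)^(1/2)` of a bounded linear operator.
Note `opAbs (adjoint T) = (T T*)^(1/2) = |T*|`. -/
noncomputable def opAbs (T : H →L[ℂ] H) : H →L[ℂ] H := CFC.sqrt (adjoint T * T)

/-- The off-diagonal operator matrix `[[0, B], [C, 0]]` acting on `H ⊕ H`
(with the Hilbert space structure `WithLp 2 (H × H)`) by `(x₁, x₂) ↦ (B x₂, C x₁)`. -/
noncomputable def offDiag (B C : H →L[ℂ] H) :
    WithLp 2 (H × H) →L[ℂ] WithLp 2 (H × H) :=
  ((WithLp.prodContinuousLinearEquiv 2 ℂ H H).symm : (H × H) →L[ℂ] WithLp 2 (H × H)).comp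
    (((B.comp (ContinuousLinearMap.snd ℂ H H)).prod
        (C.comp (ContinuousLinearMap.fst ℂ H H))).comp
      ((WithLp.prodContinuousLinearEquiv 2 ℂ H H) : WithLp 2 (H × H) →L[ℂ] H × H))

section Auxiliary

open scoped InnerProductSpace

set_option synthInstance.maxHeartbeats 1000000
set_option maxHeartbeats 1000000

/-- For a self-adjoint operator, a uniform bound on the quadratic form bounds the norm. -/
lemma aux_norm_le_of_inner (A : H →L[ℂ] H) (hA : IsSelfAdjoint A) {M : ℝ} (hM : 0 ≤ M)
    (h : ∀ x : H, ‖(⟪A x, x⟫_ℂ)‖ ≤ M * ‖x‖ ^ 2) : ‖A‖ ≤ M := by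
  have hsymm := (isSelfAdjoint_iff_isSymmetric).mp hA
  apply opNorm_le_bound _ hM
  intro x
  rcases eq_or_ne (A x) 0 with h0 | h0
  · simp [h0, mul_nonneg hM (norm_nonneg x)]
  have key : ∀ y : H, 4 * Complex.re ⟪A x, y⟫_ℂ ≤ 2 * M * (‖x‖ ^ 2 + ‖y‖ ^ 2) := by
    intro y
    have e2 : ⟪A y, x⟫_ℂ = starRingEnd ℂ ⟪A x, y⟫_ℂ :=
      (hsymm y x).trans (inner_conj_symm y (A x)).symm
    have e1 : ⟪A (x + y), x + y⟫_ℂ - ⟪A (x - y), x - y⟫_ℂ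
        = 2 * (⟪A x, y⟫_ℂ + starRingEnd ℂ ⟪A x, y⟫_ℂ) := by
      rw [← e2]
      simp only [map_add, map_sub, inner_add_left, inner_add_right, inner_sub_left,
        inner_sub_right]
      ring
    have e3 : Complex.re (⟪A (x + y), x + y⟫_ℂ - ⟪A (x - y), x - y⟫_ℂ)
        = 4 * Complex.re ⟪A x, y⟫_ℂ := by
      rw [e1, Complex.add_conj]
      simp
      ring
    have h4 : 4 * Complex.re ⟪A x, y⟫_ℂ ≤ ‖⟪A (x+y), x+y⟫_ℂ‖ + ‖⟪A (x-y), x-y⟫_ℂ‖ := by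
      calc 4 * Complex.re ⟪A x, y⟫_ℂ
          = Complex.re (⟪A (x + y), x + y⟫_ℂ - ⟪A (x - y), x - y⟫_ℂ) := e3.symm
        _ ≤ ‖⟪A (x+y), x+y⟫_ℂ - ⟪A (x-y), x-y⟫_ℂ‖ := Complex.re_le_norm _
        _ ≤ _ := norm_sub_le _ _
    have hpar := parallelogram_law_with_norm ℂ x y
    nlinarith [h (x + y), h (x - y), h4]
  have hAx : (0:ℝ) < ‖A x‖ := norm_pos_iff.mpr h0
  by_cases hx : x = 0
  · simp [hx] at h0
  have hxn : (0:ℝ) < ‖x‖ := norm_pos_iff.mpr hx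
  set y : H := ((‖x‖ / ‖A x‖ : ℝ) : ℂ) • A x with hy
  have hyn : ‖y‖ = ‖x‖ := by
    rw [hy, norm_smul, Complex.norm_real, Real.norm_eq_abs,
      abs_of_nonneg (div_nonneg hxn.le hAx.le), div_mul_cancel₀ _ hAx.ne']
  have hre : Complex.re ⟪A x, y⟫_ℂ = ‖x‖ * ‖A x‖ := by
    rw [hy, inner_smul_right, Complex.re_ofReal_mul,
      show (⟪A x, A x⟫_ℂ).re = ‖A x‖ ^ 2 from (by rw [← RCLike.re_to_complex]; exact inner_self_eq_norm_sq (A x))]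
    field_simp
  have := key y
  rw [hre, hyn] at this
  nlinarith [this, hxn, hAx, mul_pos hxn hAx]

lemma aux_numRadius_nonneg {E : Type*} [NormedAddCommGroup E] [InnerProductSpace ℂ E]
    (T : E →L[ℂ] E) : 0 ≤ numRadius T := by
  apply Real.sSup_nonneg
  rintro r ⟨y, hy, rfl⟩
  positivity

lemma aux_bddAbove {E : Type*} [NormedAddCommGroup E] [InnerProductSpace ℂ E]
    (T : E →L[ℂ] E) : BddAbove {r : ℝ | ∃ x : E, ‖x‖ = 1 ∧ r = ‖(inner ℂ (T x) x : ℂ)‖} := by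
  refine ⟨‖T‖, ?_⟩
  rintro r ⟨y, hy, rfl⟩
  calc ‖(inner ℂ (T y) y : ℂ)‖ ≤ ‖T y‖ * ‖y‖ := norm_inner_le_norm _ _
    _ ≤ (‖T‖ * ‖y‖) * ‖y‖ := by
        gcongr
        exact T.le_opNorm y
    _ = ‖T‖ := by rw [hy]; ring

lemma aux_inner_le_numRadius {E : Type*} [NormedAddCommGroup E] [InnerProductSpace ℂ E]
    (T : E →L[ℂ] E) (x : E) : ‖(⟪T x, x⟫_ℂ)‖ ≤ numRadius T * ‖x‖ ^ 2 := by
  rcases eq_or_ne x 0 with rfl | hx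
  · simp
  have hxn : (0:ℝ) < ‖x‖ := norm_pos_iff.mpr hx
  set u : E := ((‖x‖⁻¹ : ℝ) : ℂ) • x with hu
  have hun : ‖u‖ = 1 := by
    rw [hu, norm_smul, Complex.norm_real, Real.norm_eq_abs,
      abs_of_nonneg (inv_nonneg.mpr hxn.le), inv_mul_cancel₀ hxn.ne']
  have h1 : ‖(⟪T u, u⟫_ℂ)‖ ≤ numRadius T :=
    le_csSup (aux_bddAbove T) ⟨u, hun, rfl⟩
  have h2 : ⟪T u, u⟫_ℂ = ((‖x‖⁻¹ : ℝ) : ℂ) * (starRingEnd ℂ ((‖x‖⁻¹ : ℝ) : ℂ)) * ⟪T x, x⟫_ℂ := by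
    rw [hu, map_smul, inner_smul_left, inner_smul_right]
    ring
  have h3 : ‖(⟪T u, u⟫_ℂ)‖ = (‖x‖⁻¹) ^ 2 * ‖(⟪T x, x⟫_ℂ)‖ := by
    rw [h2]
    simp only [norm_mul, Complex.norm_real, RCLike.norm_conj]
    rw [Real.norm_eq_abs, abs_of_nonneg (inv_nonneg.mpr hxn.le)]
    ring
  rw [h3] at h1
  have := mul_le_mul_of_nonneg_right h1 (sq_nonneg ‖x‖)
  calc ‖(⟪T x, x⟫_ℂ)‖ = (‖x‖⁻¹ ^ 2 * ‖(⟪T x, x⟫_ℂ)‖) * ‖x‖ ^ 2 := by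
        field_simp
    _ ≤ numRadius T * ‖x‖ ^ 2 := this

lemma aux_opAbs_eq_cfc (B : H →L[ℂ] H) (hB : IsSelfAdjoint B) :
    opAbs B = cfc (fun t : ℝ => |t|) B := by
  apply CFC.sqrt_unique
  · rw [← cfc_mul _ _ B (by fun_prop) (by fun_prop)]
    rw [← star_eq_adjoint, hB.star_eq]
    calc cfc (fun t : ℝ => |t| * |t|) B = cfc (fun t : ℝ => t * t) B := by
          apply cfc_congr; intro t _; exact abs_mul_abs_self t
      _ = B * B := by rw [cfc_mul _ _ B (by fun_prop) (by fun_prop), cfc_id' ℝ B]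
  · exact cfc_nonneg (fun t _ => abs_nonneg t)

lemma aux_opAbs_nonneg (B : H →L[ℂ] H) : 0 ≤ opAbs B := CFC.sqrt_nonneg _

lemma aux_opAbs_mul_self (B : H →L[ℂ] H) (hB : IsSelfAdjoint B) :
    opAbs B * opAbs B = B ^ 2 := by
  rw [opAbs, CFC.sqrt_mul_sqrt_self (adjoint B * B)
    (by rw [← star_eq_adjoint]; exact star_mul_self_nonneg B)]
  rw [← star_eq_adjoint, hB.star_eq, sq]

lemma aux_inner_real (A : H →L[ℂ] H) (hA : IsSelfAdjoint A) (x : H) :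
    ⟪A x, x⟫_ℂ = (((⟪A x, x⟫_ℂ).re : ℝ) : ℂ) := by
  rw [← (isSelfAdjoint_iff_isSymmetric.mp hA).coe_reApplyInnerSelf_apply x,
    ContinuousLinearMap.reApplyInnerSelf_apply]
  norm_num

lemma aux_abs_inner_le (B : H →L[ℂ] H) (hB : IsSelfAdjoint B) (x : H) :
    ‖(⟪B x, x⟫_ℂ)‖ ≤ (⟪(opAbs B) x, x⟫_ℂ).re := by
  have habs := aux_opAbs_eq_cfc B hB
  have h1 : (0 : H →L[ℂ] H) ≤ opAbs B - B := by
    rw [habs]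
    have e : cfc (fun t : ℝ => |t| - t) B = cfc (fun t : ℝ => |t|) B - B := by
      rw [cfc_sub (fun t : ℝ => |t|) (fun t : ℝ => t) B (by fun_prop) (by fun_prop),
        cfc_id' ℝ B]
    rw [← e]
    exact cfc_nonneg (fun t _ => sub_nonneg.mpr (le_abs_self t))
  have h2 : (0 : H →L[ℂ] H) ≤ opAbs B + B := by
    rw [habs]
    have e : cfc (fun t : ℝ => |t| + t) B = cfc (fun t : ℝ => |t|) B + B := by
      rw [cfc_add B (fun t : ℝ => |t|) (fun t : ℝ => t) (by fun_prop) (by fun_prop),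
        cfc_id' ℝ B]
    rw [← e]
    exact cfc_nonneg (fun t _ => by linarith [neg_abs_le t])
  have r1 := ((nonneg_iff_isPositive _).mp h1).inner_nonneg_left x
  have r2 := ((nonneg_iff_isPositive _).mp h2).inner_nonneg_left x
  simp only [sub_apply, add_apply, inner_sub_left, inner_add_left, map_sub, map_add,
    RCLike.re_to_complex] at r1 r2
  have r1' := (Complex.le_def.mp r1).1
  have r2' := (Complex.le_def.mp r2).1
  simp only [Complex.zero_re, Complex.sub_re, Complex.add_re] at r1' r2'
  rw [aux_inner_real B hB x, Complex.norm_real, Real.norm_eq_abs]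
  rw [abs_le]
  constructor <;> linarith

end Auxiliary

section MainProof

open scoped InnerProductSpace

set_option synthInstance.maxHeartbeats 1000000
set_option maxHeartbeats 1000000

theorem stmt_18 (B C : H →L[ℂ] H) (hB : IsSelfAdjoint B) (hC : IsSelfAdjoint C) :
    max (‖B + C‖ ^ 2) (‖B - C‖ ^ 2) ≤
      ‖B ^ 2 + C ^ 2‖ + 2 * numRadius (opAbs B * opAbs C) := by
  set P := opAbs B with hPdef
  set Q := opAbs C with hQdef
  set w := numRadius (P * Q) with hw
  have hwnn : 0 ≤ w := aux_numRadius_nonneg _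
  set K : ℝ := ‖B ^ 2 + C ^ 2‖ + 2 * w with hK
  have hKnn : 0 ≤ K := by positivity
  have hPpos : (0 : H →L[ℂ] H) ≤ P := aux_opAbs_nonneg B
  have hQpos : (0 : H →L[ℂ] H) ≤ Q := aux_opAbs_nonneg C
  have hPsa : IsSelfAdjoint P := ((nonneg_iff_isPositive P).mp hPpos).isSelfAdjoint
  have hQsa : IsSelfAdjoint Q := ((nonneg_iff_isPositive Q).mp hQpos).isSelfAdjoint
  have hPsymm := isSelfAdjoint_iff_isSymmetric.mp hPsa
  have hQsymm := isSelfAdjoint_iff_isSymmetric.mp hQsa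
  have hRsa : IsSelfAdjoint (P + Q) := hPsa.add hQsa
  have hRsymm := isSelfAdjoint_iff_isSymmetric.mp hRsa
  -- the square of the norm ‖(P+Q)x‖ is controlled by K
  have hRnorm : ∀ x : H, ‖(P + Q) x‖ ^ 2 ≤ K * ‖x‖ ^ 2 := by
    intro x
    have e0 : ((P + Q) * (P + Q)) x = (P + Q) ((P + Q) x) := rfl
    have ee : ⟪((P + Q) * (P + Q)) x, x⟫_ℂ = ⟪(P + Q) x, (P + Q) x⟫_ℂ :=
      hRsymm ((P + Q) x) x
    have e1 : (‖(P + Q) x‖ ^ 2 : ℝ) = (⟪((P + Q) * (P + Q)) x, x⟫_ℂ).re := by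
      rw [ee, ← RCLike.re_to_complex]
      exact (inner_self_eq_norm_sq _).symm
    have expand : (P + Q) * (P + Q) = (B ^ 2 + C ^ 2) + (P * Q + Q * P) := by
      rw [← aux_opAbs_mul_self B hB, ← aux_opAbs_mul_self C hC, ← hPdef, ← hQdef]
      noncomm_ring
    have t1 : (⟪(B ^ 2 + C ^ 2) x, x⟫_ℂ).re ≤ ‖B ^ 2 + C ^ 2‖ * ‖x‖ ^ 2 := by
      calc (⟪(B ^ 2 + C ^ 2) x, x⟫_ℂ).re ≤ ‖(⟪(B ^ 2 + C ^ 2) x, x⟫_ℂ)‖ := Complex.re_le_norm _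
        _ ≤ ‖(B ^ 2 + C ^ 2) x‖ * ‖x‖ := norm_inner_le_norm _ _
        _ ≤ (‖B ^ 2 + C ^ 2‖ * ‖x‖) * ‖x‖ := by gcongr; exact le_opNorm _ _
        _ = ‖B ^ 2 + C ^ 2‖ * ‖x‖ ^ 2 := by ring
    have t2 : (⟪(P * Q) x, x⟫_ℂ).re ≤ w * ‖x‖ ^ 2 :=
      (Complex.re_le_norm _).trans (aux_inner_le_numRadius (P * Q) x)
    have t3 : (⟪(Q * P) x, x⟫_ℂ).re ≤ w * ‖x‖ ^ 2 := by
      have econj : ⟪(Q * P) x, x⟫_ℂ = starRingEnd ℂ ⟪(P * Q) x, x⟫_ℂ := by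
        calc ⟪(Q * P) x, x⟫_ℂ = ⟪P x, Q x⟫_ℂ := hQsymm (P x) x
          _ = starRingEnd ℂ ⟪Q x, P x⟫_ℂ := (inner_conj_symm (P x) (Q x)).symm
          _ = starRingEnd ℂ ⟪(P * Q) x, x⟫_ℂ := congrArg (starRingEnd ℂ) (hPsymm (Q x) x).symm
      calc (⟪(Q * P) x, x⟫_ℂ).re ≤ ‖(⟪(Q * P) x, x⟫_ℂ)‖ := Complex.re_le_norm _
        _ = ‖(⟪(P * Q) x, x⟫_ℂ)‖ := by rw [econj, RCLike.norm_conj]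
        _ ≤ w * ‖x‖ ^ 2 := aux_inner_le_numRadius (P * Q) x
    have split : (⟪((B ^ 2 + C ^ 2) + (P * Q + Q * P)) x, x⟫_ℂ).re
        = (⟪(B ^ 2 + C ^ 2) x, x⟫_ℂ).re + ((⟪(P * Q) x, x⟫_ℂ).re + (⟪(Q * P) x, x⟫_ℂ).re) := by
      simp [add_apply, inner_add_left]
    rw [e1, expand, split, hK]
    linarith
  -- hence the quadratic form of P + Q is bounded by √K ‖x‖²
  have hRbound : ∀ x : H, (⟪(P + Q) x, x⟫_ℂ).re ≤ Real.sqrt K * ‖x‖ ^ 2 := by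
    intro x
    have hn : ‖(P + Q) x‖ ≤ Real.sqrt K * ‖x‖ := by
      have : ‖(P + Q) x‖ = Real.sqrt (‖(P + Q) x‖ ^ 2) := (Real.sqrt_sq (norm_nonneg _)).symm
      rw [this]
      calc Real.sqrt (‖(P + Q) x‖ ^ 2) ≤ Real.sqrt (K * ‖x‖ ^ 2) :=
            Real.sqrt_le_sqrt (hRnorm x)
        _ = Real.sqrt K * ‖x‖ := by
            rw [Real.sqrt_mul hKnn, Real.sqrt_sq (norm_nonneg _)]
    calc (⟪(P + Q) x, x⟫_ℂ).re ≤ ‖(⟪(P + Q) x, x⟫_ℂ)‖ := Complex.re_le_norm _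
      _ ≤ ‖(P + Q) x‖ * ‖x‖ := norm_inner_le_norm _ _
      _ ≤ (Real.sqrt K * ‖x‖) * ‖x‖ := by gcongr
      _ = Real.sqrt K * ‖x‖ ^ 2 := by ring
  -- quadratic form bounds for B + C and B - C
  have hplus : ‖B + C‖ ≤ Real.sqrt K := by
    apply aux_norm_le_of_inner _ (hB.add hC) (Real.sqrt_nonneg _)
    intro x
    calc ‖(⟪(B + C) x, x⟫_ℂ)‖ ≤ ‖(⟪B x, x⟫_ℂ)‖ + ‖(⟪C x, x⟫_ℂ)‖ := by
          rw [add_apply, inner_add_left]; exact norm_add_le _ _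
      _ ≤ (⟪P x, x⟫_ℂ).re + (⟪Q x, x⟫_ℂ).re :=
          add_le_add (aux_abs_inner_le B hB x) (aux_abs_inner_le C hC x)
      _ = (⟪(P + Q) x, x⟫_ℂ).re := by rw [add_apply, inner_add_left, Complex.add_re]
      _ ≤ Real.sqrt K * ‖x‖ ^ 2 := hRbound x
  have hminus : ‖B - C‖ ≤ Real.sqrt K := by
    apply aux_norm_le_of_inner _ (hB.sub hC) (Real.sqrt_nonneg _)
    intro x
    calc ‖(⟪(B - C) x, x⟫_ℂ)‖ ≤ ‖(⟪B x, x⟫_ℂ)‖ + ‖(⟪C x, x⟫_ℂ)‖ := by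
          rw [sub_apply, inner_sub_left]; exact norm_sub_le _ _
      _ ≤ (⟪P x, x⟫_ℂ).re + (⟪Q x, x⟫_ℂ).re :=
          add_le_add (aux_abs_inner_le B hB x) (aux_abs_inner_le C hC x)
      _ = (⟪(P + Q) x, x⟫_ℂ).re := by rw [add_apply, inner_add_left, Complex.add_re]
      _ ≤ Real.sqrt K * ‖x‖ ^ 2 := hRbound x
  rw [max_le_iff]
  constructor
  · calc ‖B + C‖ ^ 2 ≤ Real.sqrt K ^ 2 := pow_le_pow_left₀ (norm_nonneg _) hplus 2
      _ = K := Real.sq_sqrt hKnn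
  · calc ‖B - C‖ ^ 2 ≤ Real.sqrt K ^ 2 := pow_le_pow_left₀ (norm_nonneg _) hminus 2
      _ = K := Real.sq_sqrt hKnn
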